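/- Let X be a real random variable with finite expectation whose cumulative distribution function F is continuous, and let s ∈ (−1,0) ∪ (0,∞). Then the cumulative Tsallis entropy Δ_s(X) := E[F(X)^s · μ̄(X)] satisfies Δ_s(X) = (1/s) ∫_ℝ F(x)(1 − F(x)^s) dx as elements of (0,∞], and moreover Δ_s(X) < ∞ whenever s > 0. -/

import Mathlib

open MeasureTheory Set ProbabilityTheory Filter Topology

namespace CTEaux

variable (ν : Measure ℝ) [IsProbabilityMeasure ν]

lemma noAtom (hc : Continuous (⇑(cdf ν))) (a : ℝ) : ν {a} = 0 := by
  conv_lhs => rw [← measure_cdf ν]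
  rw [StieltjesFunction.measure_singleton]
  have h : Function.leftLim (⇑(cdf ν)) a = cdf ν a :=
    leftLim_eq_of_tendsto
      ((hc.tendsto a).mono_left nhdsWithin_le_nhds)
  simp [h]

lemma zeroSet (hc : Continuous (⇑(cdf ν))) : ν {t | cdf ν t ≤ 0} = 0 := by
  set S := {t | cdf ν t ≤ 0} with hS
  rcases eq_empty_or_nonempty S with h | h
  · simp [h]
  · have hbdd : BddAbove S := by
      obtain ⟨b, hb⟩ : ∃ b, (0:ℝ) < cdf ν b := by
        have := tendsto_cdf_atTop ν
        have h2 : ∀ᶠ b in atTop, (1/2 : ℝ) < cdf ν b :=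
          this.eventually (eventually_gt_nhds (by norm_num))
        obtain ⟨b, hb⟩ := h2.exists
        exact ⟨b, by linarith⟩
      refine ⟨b, fun t ht => ?_⟩
      by_contra hbt
      push_neg at hbt
      have := monotone_cdf ν hbt.le
      simp only [hS, mem_setOf_eq] at ht
      nlinarith
    have hclosed : IsClosed S := isClosed_le hc continuous_const
    have ha : sSup S ∈ S := hclosed.csSup_mem h hbdd
    have hsub : S ⊆ Iic (sSup S) := fun t ht => le_csSup hbdd ht
    have : ν S ≤ ν (Iic (sSup S)) := measure_mono hsub
    rw [← ofReal_cdf ν] at this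
    have h0 : cdf ν (sSup S) ≤ 0 := ha
    simpa [ENNReal.ofReal_eq_zero.mpr h0] using this


lemma levelSet (hc : Continuous (⇑(cdf ν))) {x : ℝ} (hx : 0 < cdf ν x) :
    ν {t | t < x ∧ cdf ν t = cdf ν x} = 0 := by
  set c := cdf ν x with hcdef
  set J := {t | cdf ν t = c} with hJ
  have hxJ : x ∈ J := rfl
  have hJclosed : IsClosed J := isClosed_eq hc continuous_const
  have hJbdd : BddBelow J := by
    obtain ⟨b, hb⟩ : ∃ b, cdf ν b < c := by
      have h2 : ∀ᶠ b in atBot, cdf ν b < c :=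
        (tendsto_cdf_atBot ν).eventually (eventually_lt_nhds hx)
      exact h2.exists
    refine ⟨b, fun t ht => ?_⟩
    by_contra hbt
    push_neg at hbt
    have := monotone_cdf ν hbt.le
    simp only [hJ, mem_setOf_eq] at ht
    linarith
  have haJ : sInf J ∈ J := hJclosed.csInf_mem ⟨x, hxJ⟩ hJbdd
  set a := sInf J with ha
  have hax : a ≤ x := csInf_le hJbdd hxJ
  have hsub : {t | t < x ∧ cdf ν t = cdf ν x} ⊆ Icc a x := by
    rintro t ⟨ht1, ht2⟩
    exact ⟨csInf_le hJbdd ht2, ht1.le⟩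
  have hIcc : ν (Icc a x) = 0 := by
    have h1 : ν {a} = 0 := noAtom ν hc a
    have h2 : ν (Ioc a x) = 0 := by
      conv_lhs => rw [← measure_cdf ν]
      rw [StieltjesFunction.measure_Ioc]
      have : cdf ν a = c := haJ
      simp [this, ← hcdef]
    have : Icc a x = {a} ∪ Ioc a x := by
      rw [← Icc_self a, Icc_union_Ioc_eq_Icc le_rfl hax]
    rw [this]
    exact le_antisymm ((measure_union_le _ _).trans (by simp [h1, h2])) zero_le
  exact le_antisymm ((measure_mono hsub).trans hIcc.le) zero_le

lemma mapUniform (hc : Continuous (⇑(cdf ν))) :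
    Measure.map (⇑(cdf ν)) ν = volume.restrict (Ioc (0:ℝ) 1) := by
  have hmeas : Measurable (⇑(cdf ν)) := hc.measurable
  haveI : IsProbabilityMeasure (Measure.map (⇑(cdf ν)) ν) :=
    Measure.isProbabilityMeasure_map hmeas.aemeasurable
  refine Measure.ext_of_Iic _ _ (fun u => ?_)
  rw [Measure.map_apply hmeas measurableSet_Iic,
    Measure.restrict_apply measurableSet_Iic]
  have hiso : Iic u ∩ Ioc (0:ℝ) 1 = Ioc 0 (min u 1) := by
    ext t
    simp only [mem_inter_iff, mem_Iic, mem_Ioc, le_min_iff]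
    tauto
  rw [hiso, Real.volume_Ioc, sub_zero]
  have hpre : (⇑(cdf ν)) ⁻¹' (Iic u) = {t | cdf ν t ≤ u} := rfl
  rw [hpre]
  rcases lt_or_ge u 0 with hu | hu
  · have : {t | cdf ν t ≤ u} = ∅ := by
      ext t; simp only [mem_setOf_eq, mem_empty_iff_false, iff_false, not_le]
      exact lt_of_lt_of_le hu (cdf_nonneg ν t)
    rw [this, min_eq_left (by linarith : u ≤ 1)]
    simp [ENNReal.ofReal_eq_zero.mpr hu.le]
  · rcases le_or_gt 1 u with hu1 | hu1
    · have h2 : {t | cdf ν t ≤ u} = univ := by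
        ext t; simp only [mem_setOf_eq, mem_univ, iff_true]
        exact (cdf_le_one ν t).trans hu1
      rw [h2, measure_univ, min_eq_right hu1]
      simp
    · have hmin : min u 1 = u := min_eq_left hu1.le
      rw [hmin]
      set S := {t | cdf ν t ≤ u} with hS
      rcases eq_empty_or_nonempty S with h | h
      · -- then u = 0
        have hu0 : u = 0 := by
          by_contra h0
          have hupos : 0 < u := lt_of_le_of_ne hu (Ne.symm h0)
          have h2 : ∀ᶠ b in atBot, cdf ν b < u :=
            (tendsto_cdf_atBot ν).eventually (eventually_lt_nhds hupos)
          obtain ⟨b, hb⟩ := h2.exists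
          have hbS : b ∈ S := hb.le
          rw [h] at hbS
          exact hbS.elim
        rw [h, hu0]
        simp
      · have hSclosed : IsClosed S := isClosed_le hc continuous_const
        have hSbdd : BddAbove S := by
          obtain ⟨b, hb⟩ : ∃ b, u < cdf ν b := by
            have h2 : ∀ᶠ b in atTop, u < cdf ν b :=
              (tendsto_cdf_atTop ν).eventually (eventually_gt_nhds hu1)
            exact h2.exists
          refine ⟨b, fun t ht => ?_⟩
          by_contra hbt
          push_neg at hbt
          have := monotone_cdf ν hbt.le
          simp only [hS, mem_setOf_eq] at ht
          linarith
        have haS : sSup S ∈ S := hSclosed.csSup_mem h hSbdd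
        set a := sSup S with ha
        have hSeq : S = Iic a := by
          apply Subset.antisymm (fun t ht => le_csSup hSbdd ht)
          intro t ht
          exact le_trans (monotone_cdf ν ht) haS
        rw [hSeq, ← ofReal_cdf ν]
        congr 1
        -- cdf ν a = u
        refine le_antisymm haS (le_of_not_gt fun hlt => ?_)
        have hev : ∀ᶠ t in 𝓝 a, cdf ν t < u :=
          (hc.tendsto a) (Iio_mem_nhds hlt)
        have hev2 : ∀ᶠ t in 𝓝[>] a, cdf ν t < u := hev.filter_mono nhdsWithin_le_nhds
        obtain ⟨t, ht1, ht2⟩ := (hev2.and self_mem_nhdsWithin).exists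
        exact absurd (le_csSup hSbdd (ht1.le : t ∈ S)) (not_le.mpr ht2)


lemma lint_iic (c : ℝ) :
    ∫⁻ x in Iic c, ν (Iic x) = ∫⁻ t, ENNReal.ofReal (c - t) ∂ν := by
  have hmeasset : MeasurableSet {p : ℝ × ℝ | p.2 ≤ p.1} :=
    (isClosed_le continuous_snd continuous_fst).measurableSet
  have hmu : Measurable (Function.uncurry fun x t : ℝ =>
      ({p : ℝ × ℝ | p.2 ≤ p.1}.indicator 1 (x, t) : ENNReal)) :=
    measurable_one.indicator hmeasset
  have hswap :
      ∫⁻ x in Iic c, ∫⁻ t, {p : ℝ × ℝ | p.2 ≤ p.1}.indicator 1 (x, t) ∂ν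
        = ∫⁻ t, (∫⁻ x in Iic c, {p : ℝ × ℝ | p.2 ≤ p.1}.indicator 1 (x, t)) ∂ν :=
    lintegral_lintegral_swap hmu.aemeasurable
  calc ∫⁻ x in Iic c, ν (Iic x)
      = ∫⁻ x in Iic c, ∫⁻ t, {p : ℝ × ℝ | p.2 ≤ p.1}.indicator 1 (x, t) ∂ν := by
        refine lintegral_congr fun x => ?_
        rw [show (fun t => ({p : ℝ × ℝ | p.2 ≤ p.1}.indicator 1 (x, t) : ENNReal))
            = (Iic x).indicator 1 from ?_]
        · exact (lintegral_indicator_one measurableSet_Iic).symm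
        · funext t
          by_cases h : t ≤ x <;> simp [Set.indicator_apply, h]
    _ = ∫⁻ t, (∫⁻ x in Iic c, {p : ℝ × ℝ | p.2 ≤ p.1}.indicator 1 (x, t)) ∂ν := hswap
    _ = ∫⁻ t, ENNReal.ofReal (c - t) ∂ν := by
        refine lintegral_congr fun t => ?_
        rw [show (fun x => ({p : ℝ × ℝ | p.2 ≤ p.1}.indicator 1 (x, t) : ENNReal))
            = (Ici t).indicator 1 from ?_]
        · rw [lintegral_indicator_one measurableSet_Ici,
            Measure.restrict_apply measurableSet_Ici]
          rw [show Ici t ∩ Iic c = Icc t c from rfl, Real.volume_Icc]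
        · funext x
          by_cases h : t ≤ x <;> simp [Set.indicator_apply, h]

lemma lint_ioi :
    ∫⁻ x in Ici (0:ℝ), ν (Ioi x) = ∫⁻ t, ENNReal.ofReal t ∂ν := by
  have hmeasset : MeasurableSet {p : ℝ × ℝ | p.1 < p.2} :=
    (isOpen_lt continuous_fst continuous_snd).measurableSet
  have hmu : Measurable (Function.uncurry fun x t : ℝ =>
      ({p : ℝ × ℝ | p.1 < p.2}.indicator 1 (x, t) : ENNReal)) :=
    measurable_one.indicator hmeasset
  have hswap :
      ∫⁻ x in Ici (0:ℝ), ∫⁻ t, {p : ℝ × ℝ | p.1 < p.2}.indicator 1 (x, t) ∂ν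
        = ∫⁻ t, (∫⁻ x in Ici (0:ℝ), {p : ℝ × ℝ | p.1 < p.2}.indicator 1 (x, t)) ∂ν :=
    lintegral_lintegral_swap hmu.aemeasurable
  calc ∫⁻ x in Ici (0:ℝ), ν (Ioi x)
      = ∫⁻ x in Ici (0:ℝ), ∫⁻ t, {p : ℝ × ℝ | p.1 < p.2}.indicator 1 (x, t) ∂ν := by
        refine lintegral_congr fun x => ?_
        rw [show (fun t => ({p : ℝ × ℝ | p.1 < p.2}.indicator 1 (x, t) : ENNReal))
            = (Ioi x).indicator 1 from ?_]
        · exact (lintegral_indicator_one measurableSet_Ioi).symm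
        · funext t
          by_cases h : x < t <;> simp [Set.indicator_apply, h]
    _ = ∫⁻ t, (∫⁻ x in Ici (0:ℝ), {p : ℝ × ℝ | p.1 < p.2}.indicator 1 (x, t)) ∂ν := hswap
    _ = ∫⁻ t, ENNReal.ofReal t ∂ν := by
        refine lintegral_congr fun t => ?_
        rw [show (fun x => ({p : ℝ × ℝ | p.1 < p.2}.indicator 1 (x, t) : ENNReal))
            = (Iio t).indicator 1 from ?_]
        · rw [lintegral_indicator_one measurableSet_Iio,
            Measure.restrict_apply measurableSet_Iio]
          rw [show Iio t ∩ Ici 0 = Ico 0 t from by ext y; simp [mem_Ico, and_comm],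
            Real.volume_Ico, sub_zero]
        · funext x
          by_cases h : x < t <;> simp [Set.indicator_apply, h]

lemma abs_lint_lt_top (hint : Integrable (id : ℝ → ℝ) ν) :
    ∫⁻ t, ENNReal.ofReal |t| ∂ν < ⊤ := by
  have := hint.2
  rw [hasFiniteIntegral_iff_norm] at this
  refine lt_of_eq_of_lt (lintegral_congr fun t => ?_) this
  rw [id_eq, Real.norm_eq_abs]

lemma lint_sub_lt_top (hint : Integrable (id : ℝ → ℝ) ν) (c : ℝ) :
    ∫⁻ t, ENNReal.ofReal (c - t) ∂ν < ⊤ := by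
  have hb : ∀ t : ℝ, ENNReal.ofReal (c - t) ≤ ENNReal.ofReal |c| + ENNReal.ofReal |t| := by
    intro t
    rw [← ENNReal.ofReal_add (abs_nonneg c) (abs_nonneg t)]
    exact ENNReal.ofReal_le_ofReal (by cases abs_cases c <;> cases abs_cases t <;> linarith)
  calc ∫⁻ t, ENNReal.ofReal (c - t) ∂ν
      ≤ ∫⁻ t, (ENNReal.ofReal |c| + ENNReal.ofReal |t|) ∂ν := lintegral_mono hb
    _ = ENNReal.ofReal |c| + ∫⁻ t, ENNReal.ofReal |t| ∂ν := by
        rw [lintegral_add_left measurable_const, lintegral_const, measure_univ, mul_one]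
    _ < ⊤ := ENNReal.add_lt_top.mpr ⟨ENNReal.ofReal_lt_top, abs_lint_lt_top ν hint⟩


lemma tail (hc : Continuous (⇑(cdf ν))) {s : ℝ} (hs : s ∈ Ioo (-1:ℝ) 0 ∪ Ioi 0)
    {x : ℝ} (hx : 0 < cdf ν x) :
    ∫⁻ t in Ici x, ENNReal.ofReal (cdf ν t ^ (s-1)) ∂ν
      = ENNReal.ofReal ((1 - cdf ν x ^ s) / s) := by
  have hs0 : s ≠ 0 := by
    rcases hs with h | h
    · exact ne_of_lt h.2
    · exact ne_of_gt h
  set c := cdf ν x with hcdef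
  have hc1 : c ≤ 1 := cdf_le_one ν x
  -- replace Ici x by the superlevel set, a.e.
  have hsets : (Ici x : Set ℝ) =ᵐ[ν] {t | c ≤ cdf ν t} := by
    rw [MeasureTheory.ae_eq_set]
    constructor
    · have : (Ici x : Set ℝ) \ {t | c ≤ cdf ν t} = ∅ := by
        ext t
        simp only [mem_diff, mem_Ici, mem_setOf_eq, mem_empty_iff_false, iff_false, not_and,
          not_not, not_le]
        intro ht ht2
        exact absurd (monotone_cdf ν ht) (not_le.mpr ht2)
      simp [this]
    · have hsub : {t | c ≤ cdf ν t} \ Ici x ⊆ {t | t < x ∧ cdf ν t = cdf ν x} := by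
        rintro t ⟨ht1, ht2⟩
        simp only [mem_Ici, not_le] at ht2
        exact ⟨ht2, le_antisymm (monotone_cdf ν ht2.le) ht1⟩
      exact le_antisymm ((measure_mono hsub).trans (levelSet ν hc hx).le) zero_le
  have hg : Measurable fun u : ℝ => (Ici c).indicator
      (fun u => ENNReal.ofReal (u ^ (s-1))) u := by
    refine Measurable.indicator ?_ measurableSet_Ici
    measurability
  calc ∫⁻ t in Ici x, ENNReal.ofReal (cdf ν t ^ (s-1)) ∂ν
      = ∫⁻ t, (Ici x).indicator (fun t => ENNReal.ofReal (cdf ν t ^ (s-1))) t ∂ν := by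
        rw [lintegral_indicator measurableSet_Ici]
    _ = ∫⁻ t, {t | c ≤ cdf ν t}.indicator (fun t => ENNReal.ofReal (cdf ν t ^ (s-1))) t ∂ν :=
        lintegral_congr_ae (indicator_ae_eq_of_ae_eq_set hsets)
    _ = ∫⁻ t, ((Ici c).indicator (fun u => ENNReal.ofReal (u ^ (s-1)))) (cdf ν t) ∂ν := by
        refine lintegral_congr fun t => ?_
        by_cases h : c ≤ cdf ν t <;> simp [Set.indicator_apply, h]
    _ = ∫⁻ u, (Ici c).indicator (fun u => ENNReal.ofReal (u ^ (s-1))) u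
          ∂(Measure.map (⇑(cdf ν)) ν) := (lintegral_map hg hc.measurable).symm
    _ = ∫⁻ u in Icc c 1, ENNReal.ofReal (u ^ (s-1)) := by
        have hset : Ici c ∩ Ioc (0:ℝ) 1 = Icc c 1 := by
          ext u
          simp only [mem_inter_iff, mem_Ici, mem_Ioc, mem_Icc]
          exact ⟨fun ⟨h1, h2⟩ => ⟨h1, h2.2⟩, fun ⟨h1, h2⟩ => ⟨h1, lt_of_lt_of_le hx h1, h2⟩⟩
        rw [mapUniform ν hc, lintegral_indicator measurableSet_Ici,
          Measure.restrict_restrict measurableSet_Ici, hset]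
    _ = ∫⁻ u in Ioc c 1, ENNReal.ofReal (u ^ (s-1)) :=
        (setLIntegral_congr (Ioc_ae_eq_Icc (μ := volume) (a := c) (b := 1))).symm
    _ = ENNReal.ofReal ((1 - c ^ s) / s) := by
        have hcont : ContinuousOn (fun u : ℝ => u ^ (s-1)) (Icc c 1) := by
          intro u hu
          exact (Real.continuousAt_rpow_const u (s-1)
            (Or.inl (ne_of_gt (lt_of_lt_of_le hx hu.1)))).continuousWithinAt
        have hint : IntegrableOn (fun u : ℝ => u ^ (s-1)) (Ioc c 1) volume :=
          (hcont.integrableOn_Icc).mono_set Ioc_subset_Icc_self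
        have hnn : 0 ≤ᵐ[volume.restrict (Ioc c 1)] fun u : ℝ => u ^ (s-1) := by
          filter_upwards [ae_restrict_mem measurableSet_Ioc] with u hu
          exact Real.rpow_nonneg (le_of_lt (lt_of_lt_of_le hx hu.1.le)) _
        rw [← ofReal_integral_eq_lintegral_ofReal hint hnn]
        congr 1
        rw [← intervalIntegral.integral_of_le hc1]
        rw [integral_rpow]
        · rw [sub_add_cancel, Real.one_rpow]
        · rcases hs with h | h
          · refine Or.inr ⟨by intro hh; apply hs0; linarith, ?_⟩
            rw [uIcc_of_le hc1]
            intro h0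
            exact absurd hx (not_lt.mpr h0.1)
          · exact Or.inl (by linarith [mem_Ioi.mp h])


end CTEaux

open CTEaux in
/-- For an integrable real random variable `X` with continuous cdf `F`
and mean inactivity time `μ̄`, and `s ∈ (−1,0) ∪ (0,∞)`, the cumulative Tsallis entropy
`Δ_s(X) = E[F(X)^s ⋅ μ̄(X)]` equals `(1/s) ∫_ℝ F(x)(1 − F(x)^s) dx` in `(0,∞]`,
and is finite whenever `s > 0`. -/
theorem cumulative_tsallis_entropy_integral_repr
    {Ω : Type*} [MeasureSpace Ω] [IsProbabilityMeasure (volume : Measure Ω)]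
    (X : Ω → ℝ) (hXm : Measurable X) (hXint : Integrable X)
    (F : ℝ → ℝ) (hF : ∀ x, F x = ((volume : Measure Ω) {ω | X ω ≤ x}).toReal)
    (hFcont : Continuous F)
    (mbar : ℝ → ℝ)
    (hmbar : ∀ t, mbar t = if 0 < F t then (∫ x in Iic t, F x) / F t else 0)
    (s : ℝ) (hs : s ∈ Ioo (-1 : ℝ) 0 ∪ Ioi (0 : ℝ)) :
    (∫⁻ ω, ENNReal.ofReal (F (X ω) ^ s * mbar (X ω)) ∂(volume : Measure Ω))
        = ∫⁻ x : ℝ, ENNReal.ofReal ((1 / s) * (F x * (1 - F x ^ s)))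
      ∧ 0 < ∫⁻ ω, ENNReal.ofReal (F (X ω) ^ s * mbar (X ω)) ∂(volume : Measure Ω)
      ∧ (0 < s →
          (∫⁻ ω, ENNReal.ofReal (F (X ω) ^ s * mbar (X ω)) ∂(volume : Measure Ω)) < ⊤) := by
  classical
  set ν : Measure ℝ := Measure.map X (volume : Measure Ω) with hν
  haveI : IsProbabilityMeasure ν := Measure.isProbabilityMeasure_map hXm.aemeasurable
  set G : ℝ → ℝ := ⇑(cdf ν) with hGdef
  have hFG : ∀ x, F x = G x := by
    intro x
    rw [hF x, hGdef, cdf_eq_real, measureReal_def]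
    congr 1
    rw [hν, Measure.map_apply hXm measurableSet_Iic]
    rfl
  have hFGfun : F = G := funext hFG
  subst hFGfun
  have hc : Continuous (⇑(cdf ν)) := hFcont
  have hs0 : s ≠ 0 := by
    rcases hs with h | h
    · exact ne_of_lt h.2
    · exact ne_of_gt h
  have hGm : Measurable G := hc.measurable
  have hrpm : ∀ c : ℝ, Measurable fun x : ℝ => x ^ c := fun c => by measurability
  have hG0 : ∀ x, 0 ≤ G x := cdf_nonneg ν
  have hG1 : ∀ x, G x ≤ 1 := cdf_le_one ν
  have hGmono : Monotone G := monotone_cdf ν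
  have hofReal : ∀ x, ENNReal.ofReal (G x) = ν (Iic x) := ofReal_cdf ν
  -- integrability of id under ν
  have hint : Integrable (id : ℝ → ℝ) ν := by
    rw [hν]
    exact (integrable_map_measure aestronglyMeasurable_id hXm.aemeasurable).mpr hXint
  -- G is integrable on each Iic t
  have hlintG : ∀ t : ℝ, ∫⁻ x in Iic t, ENNReal.ofReal (G x) < ⊤ := by
    intro t
    have : ∫⁻ x in Iic t, ENNReal.ofReal (G x) = ∫⁻ x in Iic t, ν (Iic x) :=
      lintegral_congr fun x => hofReal x
    rw [this, lint_iic ν t]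
    exact lint_sub_lt_top ν hint t
  have hIntOn : ∀ t : ℝ, IntegrableOn G (Iic t) volume := by
    intro t
    refine ⟨hc.aestronglyMeasurable.restrict, ?_⟩
    rw [hasFiniteIntegral_iff_norm]
    refine lt_of_eq_of_lt (lintegral_congr fun x => ?_) (hlintG t)
    rw [Real.norm_eq_abs, abs_of_nonneg (hG0 x)]
  -- measurability of the integrand
  have hmbarm : Measurable mbar := by
    have : mbar = fun t => if 0 < G t then (∫ x in Iic t, G x) / G t else 0 := funext hmbar
    rw [this]
    have hmono : Monotone fun t => ∫ x in Iic t, G x := by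
      intro t₁ t₂ h
      refine setIntegral_mono_set (hIntOn t₂) ?_ (HasSubset.Subset.eventuallyLE (Iic_subset_Iic.mpr h))
      filter_upwards with x using hG0 x
    exact Measurable.ite (measurableSet_lt measurable_const hGm)
      (hmono.measurable.div hGm) measurable_const
  have hintegrand : Measurable fun t => ENNReal.ofReal (G t ^ s * mbar t) := by
    apply ENNReal.measurable_ofReal.comp
    exact (((hrpm s).comp hGm).mul hmbarm)
  -- push forward to ν
  have hmap : (∫⁻ ω, ENNReal.ofReal (G (X ω) ^ s * mbar (X ω)) ∂(volume : Measure Ω))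
      = ∫⁻ t, ENNReal.ofReal (G t ^ s * mbar t) ∂ν := by
    rw [hν, lintegral_map hintegrand hXm]
  -- a.e. positivity of G
  have hae : ∀ᵐ t ∂ν, 0 < G t := by
    rw [ae_iff]
    have : {t | ¬ 0 < G t} = {t | cdf ν t ≤ 0} := by
      ext t; simp [not_lt, hGdef]
    rw [this]
    exact zeroSet ν hc
  -- step 2 : a.e. rewriting
  have hstep2 : ∫⁻ t, ENNReal.ofReal (G t ^ s * mbar t) ∂ν
      = ∫⁻ t, ENNReal.ofReal (G t ^ (s-1)) * (∫⁻ x in Iic t, ENNReal.ofReal (G x)) ∂ν := by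
    refine lintegral_congr_ae (hae.mono fun t ht => ?_)
    dsimp only
    rw [hmbar t, if_pos ht]
    rw [show G t ^ s * ((∫ x in Iic t, G x) / G t) = G t ^ (s-1) * (∫ x in Iic t, G x) by
      rw [Real.rpow_sub_one (ne_of_gt ht)]; ring]
    rw [ENNReal.ofReal_mul (Real.rpow_nonneg ht.le _)]
    congr 1
    refine ofReal_integral_eq_lintegral_ofReal (hIntOn t) ?_
    filter_upwards with x using hG0 x
  -- Tonelli
  set f : ℝ → ℝ → ENNReal := fun t x =>
    {p : ℝ × ℝ | p.2 ≤ p.1}.indicator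
      (fun p => ENNReal.ofReal (G p.1 ^ (s-1)) * ENNReal.ofReal (G p.2)) (t, x) with hfdef
  have hmeasset : MeasurableSet {p : ℝ × ℝ | p.2 ≤ p.1} :=
    (isClosed_le continuous_snd continuous_fst).measurableSet
  have hmu : Measurable (Function.uncurry f) := by
    refine Measurable.indicator ?_ hmeasset
    exact (ENNReal.measurable_ofReal.comp
        (((hrpm (s-1)).comp hGm).comp measurable_fst)).mul
      (ENNReal.measurable_ofReal.comp (hGm.comp measurable_snd))
  have h1 : ∀ t, ∫⁻ x, f t x
      = ENNReal.ofReal (G t ^ (s-1)) * (∫⁻ x in Iic t, ENNReal.ofReal (G x)) := by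
    intro t
    have : (fun x => f t x)
        = (Iic t).indicator (fun x => ENNReal.ofReal (G t ^ (s-1)) * ENNReal.ofReal (G x)) := by
      funext x
      by_cases h : x ≤ t <;> simp [hfdef, Set.indicator_apply, h]
    rw [this, lintegral_indicator measurableSet_Iic,
      lintegral_const_mul' _ _ ENNReal.ofReal_ne_top]
  have h2 : ∀ x, (∫⁻ t, f t x ∂ν)
      = ENNReal.ofReal (G x) * (∫⁻ t in Ici x, ENNReal.ofReal (G t ^ (s-1)) ∂ν) := by
    intro x
    have : (fun t => f t x)
        = (Ici x).indicator (fun t => ENNReal.ofReal (G t ^ (s-1)) * ENNReal.ofReal (G x)) := by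
      funext t
      by_cases h : x ≤ t <;> simp [hfdef, Set.indicator_apply, h]
    rw [this, lintegral_indicator measurableSet_Ici,
      lintegral_mul_const' _ _ ENNReal.ofReal_ne_top, mul_comm]
  have hswap : ∫⁻ t, (∫⁻ x, f t x) ∂ν = ∫⁻ x, (∫⁻ t, f t x ∂ν) :=
    lintegral_lintegral_swap hmu.aemeasurable
  -- pointwise identification of the x-integrand
  have h3 : ∀ x, ENNReal.ofReal (G x) * (∫⁻ t in Ici x, ENNReal.ofReal (G t ^ (s-1)) ∂ν)
      = ENNReal.ofReal ((1 / s) * (G x * (1 - G x ^ s))) := by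
    intro x
    by_cases hx : 0 < G x
    · rw [tail ν hc hs hx, ← ENNReal.ofReal_mul (hG0 x)]
      congr 1
      ring
    · have h0 : G x = 0 := le_antisymm (not_lt.mp hx) (hG0 x)
      simp [h0]
  -- the main identity
  have hmain : (∫⁻ ω, ENNReal.ofReal (G (X ω) ^ s * mbar (X ω)) ∂(volume : Measure Ω))
      = ∫⁻ x : ℝ, ENNReal.ofReal ((1 / s) * (G x * (1 - G x ^ s))) := by
    rw [hmap, hstep2]
    rw [show (∫⁻ t, ENNReal.ofReal (G t ^ (s-1)) * (∫⁻ x in Iic t, ENNReal.ofReal (G x)) ∂ν)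
        = ∫⁻ t, (∫⁻ x, f t x) ∂ν from (lintegral_congr fun t => (h1 t).symm)]
    rw [hswap]
    refine lintegral_congr fun x => ?_
    rw [h2 x, h3 x]
  refine ⟨hmain, ?_, ?_⟩
  · -- positivity
    rw [hmain]
    obtain ⟨a, ha⟩ : ∃ a, G a < 1/2 :=
      ((tendsto_cdf_atBot ν).eventually (eventually_lt_nhds (by norm_num))).exists
    obtain ⟨b, hb⟩ : ∃ b, (1/2:ℝ) < G b :=
      ((tendsto_cdf_atTop ν).eventually (eventually_gt_nhds (by norm_num))).exists
    have hab : a ≤ b := by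
      by_contra h
      push_neg at h
      have := hGmono h.le
      linarith
    obtain ⟨x₀, _, hx₀⟩ := intermediate_value_Icc hab hc.continuousOn
      (show (1/2:ℝ) ∈ Icc (G a) (G b) from ⟨ha.le, hb.le⟩)
    have hnb : ∀ᶠ x in 𝓝 x₀, G x ∈ Ioo (1/4:ℝ) (3/4) := by
      refine (hc.tendsto x₀) ?_
      rw [show cdf ν x₀ = (1/2:ℝ) from hx₀]
      exact Ioo_mem_nhds (by norm_num) (by norm_num)
    obtain ⟨δ, hδ, hball⟩ := Metric.mem_nhds_iff.mp hnb
    rw [Real.ball_eq_Ioo] at hball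
    have hkpos : 0 < (1/s) * (1 - (3/4:ℝ)^s) := by
      rcases hs with h | h
      · have h34 : 1 < (3/4:ℝ)^s :=
          Real.one_lt_rpow_of_pos_of_lt_one_of_neg (by norm_num) (by norm_num) h.2
        have : 1/s < 0 := div_neg_of_pos_of_neg one_pos h.2
        nlinarith
      · have h34 : (3/4:ℝ)^s < 1 := Real.rpow_lt_one (by norm_num) (by norm_num) h
        have : 0 < 1/s := div_pos one_pos h
        nlinarith
    set ε : ℝ := (1/4) * ((1/s) * (1 - (3/4:ℝ)^s)) with hεdef
    have hε : 0 < ε := mul_pos (by norm_num) hkpos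
    have hlow : ∀ x ∈ Ioo (x₀ - δ) (x₀ + δ),
        ENNReal.ofReal ε ≤ ENNReal.ofReal ((1 / s) * (G x * (1 - G x ^ s))) := by
      intro x hx
      have hu : G x ∈ Ioo (1/4:ℝ) (3/4) := hball hx
      refine ENNReal.ofReal_le_ofReal ?_
      have hk : (1/s) * (1 - (3/4:ℝ)^s) ≤ (1/s) * (1 - G x ^ s) := by
        rcases hs with h | h
        · have hle : (3/4:ℝ)^s ≤ G x ^ s :=
            Real.rpow_le_rpow_of_nonpos (by linarith [hu.1]) hu.2.le h.2.le
          have hsneg : 1/s < 0 := div_neg_of_pos_of_neg one_pos h.2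
          nlinarith
        · have hle : G x ^ s ≤ (3/4:ℝ)^s :=
            Real.rpow_le_rpow (by linarith [hu.1]) hu.2.le h.le
          have hspos' : 0 < 1/s := div_pos one_pos h
          nlinarith
      have h4 : (1/4:ℝ) * ((1/s) * (1 - (3/4:ℝ)^s)) ≤ G x * ((1/s) * (1 - G x ^ s)) :=
        mul_le_mul hu.1.le hk hkpos.le (by linarith [hu.1])
      calc ε ≤ G x * ((1/s) * (1 - G x ^ s)) := h4
        _ = (1 / s) * (G x * (1 - G x ^ s)) := by ring
    have hfm : Measurable fun x => ENNReal.ofReal ((1 / s) * (G x * (1 - G x ^ s))) := by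
      apply ENNReal.measurable_ofReal.comp
      exact measurable_const.mul (hGm.mul (measurable_const.sub
        ((hrpm s).comp hGm)))
    calc (0:ENNReal)
        < ENNReal.ofReal ε * volume (Ioo (x₀ - δ) (x₀ + δ)) := by
          refine ENNReal.mul_pos (ne_of_gt (ENNReal.ofReal_pos.mpr hε)) ?_
          rw [Real.volume_Ioo]
          refine ne_of_gt (ENNReal.ofReal_pos.mpr (by linarith))
      _ = ∫⁻ x in Ioo (x₀ - δ) (x₀ + δ), ENNReal.ofReal ε := (setLIntegral_const _ _).symm
      _ ≤ ∫⁻ x in Ioo (x₀ - δ) (x₀ + δ), ENNReal.ofReal ((1 / s) * (G x * (1 - G x ^ s))) :=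
          setLIntegral_mono hfm hlow
      _ ≤ ∫⁻ x : ℝ, ENNReal.ofReal ((1 / s) * (G x * (1 - G x ^ s))) :=
          setLIntegral_le_lintegral _ _
  · -- finiteness for 0 < s
    intro hspos
    rw [hmain]
    rw [← lintegral_add_compl (fun x => ENNReal.ofReal ((1 / s) * (G x * (1 - G x ^ s))))
      (measurableSet_Iic (a := (0:ℝ)))]
    rw [compl_Iic]
    have hGofReal : Measurable fun x => ENNReal.ofReal (G x) :=
      ENNReal.measurable_ofReal.comp hGm
    have hpart1 : ∫⁻ x in Iic (0:ℝ), ENNReal.ofReal ((1 / s) * (G x * (1 - G x ^ s))) < ⊤ := by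
      have hb : ∀ x ∈ Iic (0:ℝ), ENNReal.ofReal ((1 / s) * (G x * (1 - G x ^ s)))
          ≤ ENNReal.ofReal (1/s) * ENNReal.ofReal (G x) := by
        intro x _
        rw [← ENNReal.ofReal_mul (le_of_lt (div_pos one_pos hspos))]
        refine ENNReal.ofReal_le_ofReal ?_
        have h1 : G x * (1 - G x ^ s) ≤ G x * 1 :=
          mul_le_mul_of_nonneg_left (by linarith [Real.rpow_nonneg (hG0 x) s]) (hG0 x)
        have : G x * (1 - G x ^ s) ≤ G x := by linarith
        exact mul_le_mul_of_nonneg_left this (le_of_lt (div_pos one_pos hspos))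
      calc ∫⁻ x in Iic (0:ℝ), ENNReal.ofReal ((1 / s) * (G x * (1 - G x ^ s)))
          ≤ ∫⁻ x in Iic (0:ℝ), ENNReal.ofReal (1/s) * ENNReal.ofReal (G x) :=
            setLIntegral_mono (measurable_const.mul hGofReal) hb
        _ = ENNReal.ofReal (1/s) * ∫⁻ x in Iic (0:ℝ), ENNReal.ofReal (G x) :=
            lintegral_const_mul' _ _ ENNReal.ofReal_ne_top
        _ < ⊤ := ENNReal.mul_lt_top ENNReal.ofReal_lt_top (hlintG 0)
    have hpart2 : ∫⁻ x in Ioi (0:ℝ), ENNReal.ofReal ((1 / s) * (G x * (1 - G x ^ s))) < ⊤ := by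
      set C : ℝ := (max 1 s) / s with hCdef
      have hC0 : 0 ≤ C := div_nonneg (le_trans zero_le_one (le_max_left 1 s)) hspos.le
      have hkey : ∀ u : ℝ, 0 ≤ u → u ≤ 1 → (1/s) * (u * (1 - u^s)) ≤ C * (1 - u) := by
        intro u hu0 hu1
        have hus0 : 0 ≤ u ^ s := Real.rpow_nonneg hu0 s
        have hus1 : u ^ s ≤ 1 := Real.rpow_le_one hu0 hu1 hspos.le
        have h1 : u * (1 - u^s) ≤ 1 - u^s :=
          mul_le_of_le_one_left (by linarith) hu1
        have h2 : (1/s) * (u * (1 - u^s)) ≤ (1/s) * (1 - u^s) :=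
          mul_le_mul_of_nonneg_left h1 (le_of_lt (div_pos one_pos hspos))
        rcases le_total s 1 with hs1 | hs1
        · have hC : C = 1/s := by rw [hCdef, max_eq_left hs1]
          rw [hC]
          refine h2.trans (mul_le_mul_of_nonneg_left ?_ (le_of_lt (div_pos one_pos hspos)))
          -- 1 - u^s ≤ 1 - u  i.e.  u ≤ u^s
          rcases eq_or_lt_of_le hu0 with h0 | h0
          · rw [← h0, Real.zero_rpow hs0]
          · have := Real.rpow_le_rpow_of_exponent_ge h0 hu1 hs1
            rw [Real.rpow_one] at this
            linarith
        · have hC : C = 1 := by rw [hCdef, max_eq_right hs1, div_self hs0]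
          rw [hC, one_mul]
          refine h2.trans ?_
          -- (1/s)(1 - u^s) ≤ 1 - u  i.e.  1 - u^s ≤ s (1-u) i.e. 1 + s(u-1) ≤ u^s
          have hB := one_add_mul_self_le_rpow_one_add (show (-1:ℝ) ≤ u - 1 by linarith) hs1
          rw [show (1:ℝ) + (u - 1) = u by ring] at hB
          rw [div_mul_eq_mul_div, div_le_iff₀ hspos]
          nlinarith
      have hb : ∀ x ∈ Ioi (0:ℝ), ENNReal.ofReal ((1 / s) * (G x * (1 - G x ^ s)))
          ≤ ENNReal.ofReal C * ν (Ioi x) := by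
        intro x _
        have hν' : ν (Ioi x) = ENNReal.ofReal (1 - G x) := by
          rw [show Ioi x = (Iic x)ᶜ from compl_Iic.symm,
            prob_compl_eq_one_sub measurableSet_Iic, ← hofReal x,
            ENNReal.ofReal_sub 1 (hG0 x), ENNReal.ofReal_one]
        rw [hν', ← ENNReal.ofReal_mul hC0]
        exact ENNReal.ofReal_le_ofReal (hkey (G x) (hG0 x) (hG1 x))
      have hνm : Measurable fun x : ℝ => ν (Ioi x) := by
        have : (fun x : ℝ => ν (Ioi x)) = fun x => 1 - ENNReal.ofReal (G x) := by
          funext x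
          rw [show Ioi x = (Iic x)ᶜ from compl_Iic.symm,
            prob_compl_eq_one_sub measurableSet_Iic, hofReal x]
        rw [this]
        exact measurable_const.sub hGofReal
      calc ∫⁻ x in Ioi (0:ℝ), ENNReal.ofReal ((1 / s) * (G x * (1 - G x ^ s)))
          ≤ ∫⁻ x in Ioi (0:ℝ), ENNReal.ofReal C * ν (Ioi x) :=
            setLIntegral_mono (measurable_const.mul hνm) hb
        _ = ENNReal.ofReal C * ∫⁻ x in Ioi (0:ℝ), ν (Ioi x) :=
            lintegral_const_mul' _ _ ENNReal.ofReal_ne_top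
        _ ≤ ENNReal.ofReal C * ∫⁻ x in Ici (0:ℝ), ν (Ioi x) := by
            refine mul_le_mul_right (lintegral_mono_set Ioi_subset_Ici_self) _
        _ = ENNReal.ofReal C * ∫⁻ t, ENNReal.ofReal t ∂ν := by rw [lint_ioi ν]
        _ ≤ ENNReal.ofReal C * ∫⁻ t, ENNReal.ofReal |t| ∂ν := by
            refine mul_le_mul_right (lintegral_mono fun t =>
              ENNReal.ofReal_le_ofReal (le_abs_self t)) _
        _ < ⊤ := ENNReal.mul_lt_top ENNReal.ofReal_lt_top (abs_lint_lt_top ν hint)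
    exact ENNReal.add_lt_top.mpr ⟨hpart1, hpart2⟩
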